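/- Let H be a complex Hilbert space with dim H ≥ 3 and let k be a positive integer with k < dim H if H is finite-dimensional. The ortho-Grassmann graph Γ⊥_k(H) is connected: any two k-dimensional subspaces of H are joined by a finite path of consecutively ortho-adjacent k-dimensional subspaces. -/

import Mathlib

noncomputable section

open scoped Classical

variable {H : Type*} [NormedAddCommGroup H] [InnerProductSpace ℂ H] [CompleteSpace H]

/-- The orthogonal projection onto `X`, as an operator `H → H` (junk value `0` if the
orthogonal projection onto `X` does not exist; it always exists for finite-dimensional,
and more generally complete, subspaces). -/
noncomputable def projOn (X : Submodule ℂ H) : H →L[ℂ] H :=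
  if h : Submodule.HasOrthogonalProjection X then
    haveI := h
    X.subtypeL.comp X.orthogonalProjectionOnto
  else 0

/-- Two subspaces of `H` are compatible if their orthogonal projections commute. -/
def Compatible (X Y : Submodule ℂ H) : Prop :=
  projOn X * projOn Y = projOn Y * projOn X

/-- `X` is a `k`-dimensional subspace of `H`. -/
def IsDim (k : ℕ) (X : Submodule ℂ H) : Prop :=
  FiniteDimensional ℂ X ∧ Module.finrank ℂ X = k

/-- Two (distinct) `k`-dimensional subspaces are adjacent if their intersection is
`(k-1)`-dimensional. -/
def AdjacentSub (k : ℕ) (X Y : Submodule ℂ H) : Prop :=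
  X ≠ Y ∧ Module.finrank ℂ ↥(X ⊓ Y) = k - 1

/-- Ortho-adjacency: adjacent and compatible. -/
def OrthoAdjacent (k : ℕ) (X Y : Submodule ℂ H) : Prop :=
  AdjacentSub k X Y ∧ Compatible X Y

/-- The ortho-Grassmann graph `Γ⊥_k(H)` on the `k`-dimensional subspaces of `H`:
two `k`-dimensional subspaces are connected by an edge if they are ortho-adjacent. -/
def orthoGrassmannGraph (H : Type*) [NormedAddCommGroup H] [InnerProductSpace ℂ H]
    [CompleteSpace H] (k : ℕ) : SimpleGraph {X : Submodule ℂ H // IsDim k X} where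
  Adj X Y := OrthoAdjacent k X.1 Y.1
  symm := ⟨by
    rintro X Y ⟨⟨hne, hdim⟩, hc⟩
    refine ⟨⟨hne.symm, by rwa [inf_comm]⟩, ?_⟩
    unfold Compatible at hc ⊢
    exact hc.symm⟩
  loopless := ⟨fun X h => h.1.1 rfl⟩

/-- The Grassmann graph `Γ_k(H)` on the `k`-dimensional subspaces of `H`:
two `k`-dimensional subspaces are connected by an edge if they are adjacent. -/
def grassmannGraph (H : Type*) [NormedAddCommGroup H] [InnerProductSpace ℂ H]
    [CompleteSpace H] (k : ℕ) : SimpleGraph {X : Submodule ℂ H // IsDim k X} where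
  Adj X Y := AdjacentSub k X.1 Y.1
  symm := ⟨by
    rintro X Y ⟨hne, hdim⟩
    exact ⟨hne.symm, by rwa [inf_comm]⟩⟩
  loopless := ⟨fun X h => h.1 rfl⟩

set_option linter.unusedSectionVars false
set_option maxHeartbeats 1000000

section AuxLemmas
open Module Submodule

variable {H : Type*} [NormedAddCommGroup H] [InnerProductSpace ℂ H] [CompleteSpace H]

local notation "⟪" x ", " y "⟫" => @inner ℂ _ _ x y

lemma projOn_apply (X : Submodule ℂ H) [HasOrthogonalProjection X] (v : H) :
    projOn X v = (orthogonalProjection X v : H) := by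
  unfold projOn
  rw [dif_pos ‹_›]; rfl

lemma projOn_mem (X : Submodule ℂ H) [HasOrthogonalProjection X] (v : H) :
    projOn X v ∈ X := by
  rw [projOn_apply]; exact (orthogonalProjection X v).2

lemma projOn_of_mem {X : Submodule ℂ H} [HasOrthogonalProjection X] {v : H} (hv : v ∈ X) :
    projOn X v = v := by
  rw [projOn_apply]; exact Submodule.starProjection_eq_self_iff.2 hv

lemma projOn_of_orthogonal {X : Submodule ℂ H} [HasOrthogonalProjection X] {v : H}
    (hv : v ∈ Xᗮ) : projOn X v = 0 := by
  rw [projOn_apply, Submodule.orthogonalProjectionOnto_apply_of_mem_orthogonal hv,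
    ZeroMemClass.coe_zero]

lemma sub_projOn_mem_orthogonal (X : Submodule ℂ H) [HasOrthogonalProjection X] (v : H) :
    v - projOn X v ∈ Xᗮ := by
  rw [projOn_apply]; exact Submodule.sub_starProjection_mem_orthogonal v

lemma projOn_mul_projOn_of_isOrtho {A B : Submodule ℂ H} [HasOrthogonalProjection A]
    [HasOrthogonalProjection B] (h : A ⟂ B) : projOn A * projOn B = 0 := by
  ext v
  have hB : projOn B v ∈ Aᗮ := (Submodule.isOrtho_comm.1 h) (projOn_mem B v)
  simpa using projOn_of_orthogonal hB

lemma projOn_sup_of_isOrtho {A B : Submodule ℂ H} [FiniteDimensional ℂ A]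
    [FiniteDimensional ℂ B] (h : A ⟂ B) : projOn (A ⊔ B) = projOn A + projOn B := by
  ext v
  have hmem : projOn A v + projOn B v ∈ A ⊔ B :=
    Submodule.add_mem_sup (projOn_mem A v) (projOn_mem B v)
  have horth : v - (projOn A v + projOn B v) ∈ (A ⊔ B)ᗮ := by
    rw [← Submodule.inf_orthogonal]
    constructor
    · have h1 : v - projOn A v ∈ Aᗮ := sub_projOn_mem_orthogonal A v
      have h2 : projOn B v ∈ Aᗮ := (Submodule.isOrtho_comm.1 h) (projOn_mem B v)
      show v - (projOn A v + projOn B v) ∈ Aᗮ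
      have := Aᗮ.sub_mem h1 h2
      convert this using 1
      abel
    · have h1 : v - projOn B v ∈ Bᗮ := sub_projOn_mem_orthogonal B v
      have h2 : projOn A v ∈ Bᗮ := h (projOn_mem A v)
      show v - (projOn A v + projOn B v) ∈ Bᗮ
      have := Bᗮ.sub_mem h1 h2
      convert this using 1
      abel
  have := Submodule.eq_starProjection_of_mem_orthogonal (K := A ⊔ B) hmem horth
  rw [ContinuousLinearMap.add_apply, projOn_apply]; exact this

lemma compatible_config (W : Submodule ℂ H) [FiniteDimensional ℂ W] {a b : H}
    (ha : a ∈ Wᗮ) (hb : b ∈ Wᗮ) (hab : ⟪a, b⟫ = 0) :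
    Compatible (W ⊔ (ℂ ∙ a)) (W ⊔ (ℂ ∙ b)) := by
  have hWa : W ⟂ (ℂ ∙ a) := Submodule.isOrtho_comm.1 ((Submodule.span_le).2 (by simpa using ha))
  have hWb : W ⟂ (ℂ ∙ b) := Submodule.isOrtho_comm.1 ((Submodule.span_le).2 (by simpa using hb))
  have hab' : (ℂ ∙ a) ⟂ (ℂ ∙ b) := by
    rw [Submodule.isOrtho_iff_le, Submodule.span_le]
    intro x hx
    rcases Set.mem_singleton_iff.1 hx with rfl
    exact (Submodule.mem_orthogonal_singleton_iff_inner_left (𝕜 := ℂ)).2 hab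
  have hWW : projOn W * projOn W = projOn W := by
    ext v; simpa using projOn_of_mem (projOn_mem W v)
  unfold Compatible
  rw [projOn_sup_of_isOrtho hWa, projOn_sup_of_isOrtho hWb, add_mul, mul_add, mul_add,
    add_mul, mul_add, mul_add, hWW,
    projOn_mul_projOn_of_isOrtho hWb, projOn_mul_projOn_of_isOrtho hWa.symm,
    projOn_mul_projOn_of_isOrtho hab', projOn_mul_projOn_of_isOrtho hWa,
    projOn_mul_projOn_of_isOrtho hWb.symm, projOn_mul_projOn_of_isOrtho hab'.symm]

end AuxLemmas
section AuxLemmas2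
open Module Submodule

variable {H : Type*} [NormedAddCommGroup H] [InnerProductSpace ℂ H] [CompleteSpace H]

local notation "⟪" x ", " y "⟫" => @inner ℂ _ _ x y

lemma finrank_sup_span_notMem (W : Submodule ℂ H) [FiniteDimensional ℂ W] {v : H}
    (hv : v ∉ W) : finrank ℂ ↥(W ⊔ (ℂ ∙ v)) = finrank ℂ W + 1 := by
  have hv0 : v ≠ 0 := fun h => hv (h ▸ W.zero_mem)
  have hdisj : W ⊓ (ℂ ∙ v) = ⊥ := by
    rw [eq_bot_iff]
    intro u hu
    rw [Submodule.mem_inf, Submodule.mem_span_singleton] at hu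
    obtain ⟨huW, huv⟩ := hu
    obtain ⟨s, rfl⟩ := huv
    rcases eq_or_ne s 0 with rfl | hs
    · simp
    · exact absurd (by simpa [hs] using W.smul_mem s⁻¹ huW) hv
  have := Submodule.finrank_sup_add_finrank_inf_eq W (ℂ ∙ v)
  rw [hdisj, finrank_bot, finrank_span_singleton hv0] at this
  omega

lemma notMem_of_mem_orthogonal {W : Submodule ℂ H} {v : H} (hv : v ∈ Wᗮ) (hv0 : v ≠ 0) :
    v ∉ W := fun h => hv0 (by simpa [inner_self_eq_zero] using hv v h)

lemma finrank_sup_span_orth (W : Submodule ℂ H) [FiniteDimensional ℂ W] {v : H}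
    (hv : v ∈ Wᗮ) (hv0 : v ≠ 0) : finrank ℂ ↥(W ⊔ (ℂ ∙ v)) = finrank ℂ W + 1 :=
  finrank_sup_span_notMem W (notMem_of_mem_orthogonal hv hv0)

lemma inf_config (W : Submodule ℂ H) {a b : H} (ha : a ∈ Wᗮ) (hb : b ∈ Wᗮ)
    (ha0 : a ≠ 0) (hab : ⟪a, b⟫ = 0) :
    (W ⊔ (ℂ ∙ a)) ⊓ (W ⊔ (ℂ ∙ b)) = W := by
  refine le_antisymm ?_ (le_inf le_sup_left le_sup_left)
  intro v hv
  rw [Submodule.mem_inf] at hv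
  obtain ⟨hv1, hv2⟩ := hv
  rw [Submodule.mem_sup] at hv1 hv2
  obtain ⟨w, hw, x, hx, rfl⟩ := hv1
  obtain ⟨w', hw', y, hy, heq⟩ := hv2
  rw [Submodule.mem_span_singleton] at hx hy
  obtain ⟨s, rfl⟩ := hx
  obtain ⟨t, rfl⟩ := hy
  have h1 : ⟪a, w + s • a⟫ = s * ⟪a, a⟫ := by
    rw [inner_add_right, inner_smul_right, inner_eq_zero_symm.2 (ha w hw)]
    ring
  have h2 : ⟪a, w' + t • b⟫ = 0 := by
    rw [inner_add_right, inner_smul_right, inner_eq_zero_symm.2 (ha w' hw'), hab]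
    ring
  rw [heq, h1] at h2
  have hs : s = 0 := by
    rcases mul_eq_zero.1 h2 with h | h
    · exact h
    · exact absurd h (inner_self_ne_zero.2 ha0)
  simpa [hs] using hw

lemma orthoAdjacent_config (W : Submodule ℂ H) [FiniteDimensional ℂ W] {a b : H}
    (ha : a ∈ Wᗮ) (hb : b ∈ Wᗮ) (ha0 : a ≠ 0) (hb0 : b ≠ 0) (hab : ⟪a, b⟫ = 0) :
    OrthoAdjacent (finrank ℂ W + 1) (W ⊔ (ℂ ∙ a)) (W ⊔ (ℂ ∙ b)) := by
  refine ⟨⟨?_, ?_⟩, compatible_config W ha hb hab⟩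
  · intro h
    have h2 := inf_config W ha hb ha0 hab
    rw [h, inf_idem] at h2
    have h3 := finrank_sup_span_orth W hb hb0
    rw [h2] at h3
    omega
  · rw [inf_config W ha hb ha0 hab]
    omega

lemma isDim_config (W : Submodule ℂ H) [FiniteDimensional ℂ W] {a : H}
    (ha : a ∈ Wᗮ) (ha0 : a ≠ 0) : IsDim (finrank ℂ W + 1) (W ⊔ (ℂ ∙ a)) :=
  ⟨inferInstance, finrank_sup_span_orth W ha ha0⟩

lemma sup_inf_orth_span {Z : Submodule ℂ H} [FiniteDimensional ℂ Z] {e : H} (he : e ∈ Z) :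
    (Z ⊓ (ℂ ∙ e)ᗮ) ⊔ (ℂ ∙ e) = Z := by
  refine le_antisymm (sup_le inf_le_left ((Submodule.span_le).2 (by simpa using he))) ?_
  intro v hv
  have h1 : v - projOn (ℂ ∙ e) v ∈ (ℂ ∙ e)ᗮ := sub_projOn_mem_orthogonal _ v
  have h2 : projOn (ℂ ∙ e) v ∈ (ℂ ∙ e) := projOn_mem _ v
  have h3 : projOn (ℂ ∙ e) v ∈ Z :=
    ((Submodule.span_le).2 (by simpa using he) : (ℂ ∙ e) ≤ Z) h2
  have : v = (v - projOn (ℂ ∙ e) v) + projOn (ℂ ∙ e) v := by abel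
  rw [this]
  exact Submodule.add_mem_sup ⟨Z.sub_mem hv h3, h1⟩ h2

lemma exists_mem_orthogonal_of_lt {Z X : Submodule ℂ H} [FiniteDimensional ℂ X]
    (h : Z < X) : ∃ x, x ∈ X ∧ x ∈ Zᗮ ∧ x ≠ 0 := by
  haveI : FiniteDimensional ℂ Z := Submodule.finiteDimensional_of_le h.le
  obtain ⟨v, hvX, hvZ⟩ := SetLike.exists_of_lt h
  refine ⟨v - projOn Z v, X.sub_mem hvX (h.le (projOn_mem Z v)),
    sub_projOn_mem_orthogonal Z v, ?_⟩
  intro h0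
  exact hvZ (by rw [sub_eq_zero] at h0; rw [h0]; exact projOn_mem Z v)

lemma span_pair_swap {x y : H} (c d : ℂ) (hc : c ≠ 0) :
    (ℂ ∙ x) ⊔ (ℂ ∙ (c • y + d • x)) = (ℂ ∙ x) ⊔ (ℂ ∙ y) := by
  refine le_antisymm (sup_le le_sup_left ?_) (sup_le le_sup_left ?_)
  · rw [Submodule.span_singleton_le_iff_mem]
    exact Submodule.add_mem _
      (Submodule.smul_mem _ _ (Submodule.mem_sup_right (Submodule.mem_span_singleton_self y)))
      (Submodule.smul_mem _ _ (Submodule.mem_sup_left (Submodule.mem_span_singleton_self x)))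
  · rw [Submodule.span_singleton_le_iff_mem]
    have hmem : c⁻¹ • ((c • y + d • x) - d • x) ∈ (ℂ ∙ x) ⊔ (ℂ ∙ (c • y + d • x)) :=
      Submodule.smul_mem _ _ (Submodule.sub_mem _
        (Submodule.mem_sup_right (Submodule.mem_span_singleton_self _))
        (Submodule.smul_mem _ _ (Submodule.mem_sup_left (Submodule.mem_span_singleton_self x))))
    simpa [add_sub_cancel_right, smul_smul, inv_mul_cancel₀ hc, one_smul] using hmem

lemma exists_intermediate_submodule {X : Submodule ℂ H} [FiniteDimensional ℂ X] :
    ∀ (d : ℕ) (S : Submodule ℂ H), S ≤ X → finrank ℂ S + d ≤ finrank ℂ X →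
      ∃ W, S ≤ W ∧ W ≤ X ∧ finrank ℂ W = finrank ℂ S + d := by
  intro d
  induction d with
  | zero => exact fun S hS _ => ⟨S, le_rfl, hS, by omega⟩
  | succ n ih =>
    intro S hSX hrank
    haveI : FiniteDimensional ℂ S := Submodule.finiteDimensional_of_le hSX
    have hlt : S < X := by
      rcases lt_or_eq_of_le hSX with h | h
      · exact h
      · subst h; omega
    obtain ⟨x, hxX, hxS, hx0⟩ := exists_mem_orthogonal_of_lt hlt
    have hfr : finrank ℂ ↥(S ⊔ (ℂ ∙ x)) = finrank ℂ S + 1 := finrank_sup_span_orth S hxS hx0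
    have hsub : S ⊔ (ℂ ∙ x) ≤ X :=
      sup_le hSX ((Submodule.span_le).2 (by simpa using hxX))
    obtain ⟨W, hW1, hW2, hW3⟩ := ih (S ⊔ (ℂ ∙ x)) hsub (by omega)
    exact ⟨W, le_trans le_sup_left hW1, hW2, by omega⟩

end AuxLemmas2
section AuxLemmas3
open Module Submodule

variable {H : Type*} [NormedAddCommGroup H] [InnerProductSpace ℂ H] [CompleteSpace H]

local notation "⟪" x ", " y "⟫" => @inner ℂ _ _ x y

lemma mem_orthogonal_sup {A B : Submodule ℂ H} {v : H} (hA : v ∈ Aᗮ) (hB : v ∈ Bᗮ) :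
    v ∈ (A ⊔ B)ᗮ := by
  rw [← Submodule.inf_orthogonal]
  exact ⟨hA, hB⟩

lemma inner_zero_of_mem_orthogonal {Z : Submodule ℂ H} {u v : H} (hu : u ∈ Z) (hv : v ∈ Zᗮ) :
    ⟪u, v⟫ = 0 :=
  (Submodule.mem_orthogonal Z v).1 hv u hu

lemma grassmann_step {k : ℕ} (hk : 0 < k) {X Y : Submodule ℂ H} (hX : IsDim k X)
    (hY : IsDim k Y) (hne : X ≠ Y) :
    ∃ X' : Submodule ℂ H, IsDim k X' ∧ AdjacentSub k X X' ∧
      Module.finrank ℂ ↥(X ⊓ Y) < Module.finrank ℂ ↥(X' ⊓ Y) ∧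
      Module.finrank ℂ ↥(X' ⊓ Y) ≤ k := by
  haveI := hX.1; haveI := hY.1
  have hinf_le : finrank ℂ ↥(X ⊓ Y) ≤ k := hX.2 ▸ Submodule.finrank_mono inf_le_left
  have hinf_lt : finrank ℂ ↥(X ⊓ Y) < k := by
    rcases lt_or_eq_of_le hinf_le with h | h
    · exact h
    · exfalso
      have h1 : X ⊓ Y = X := Submodule.eq_of_le_of_finrank_eq inf_le_left (by rw [h, hX.2])
      have h2 : X ≤ Y := by rw [← h1]; exact inf_le_right
      exact hne (Submodule.eq_of_le_of_finrank_eq h2 (by rw [hX.2, hY.2]))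
  obtain ⟨y, hyY, hyX⟩ : ∃ y, y ∈ Y ∧ y ∉ X := by
    by_contra hc
    push_neg at hc
    exact hne (Submodule.eq_of_le_of_finrank_eq (fun v hv => hc v hv) (by rw [hX.2, hY.2])).symm
  obtain ⟨W, hW1, hW2, hW3⟩ := exists_intermediate_submodule (k - 1 - finrank ℂ ↥(X ⊓ Y))
    (X ⊓ Y) inf_le_left (by rw [hX.2]; omega)
  have hWr : finrank ℂ W = k - 1 := by omega
  haveI : FiniteDimensional ℂ W := Submodule.finiteDimensional_of_le hW2
  have hyW : y ∉ W := fun h => hyX (hW2 h)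
  refine ⟨W ⊔ (ℂ ∙ y), ⟨inferInstance, ?_⟩, ⟨?_, ?_⟩, ?_, ?_⟩
  · rw [finrank_sup_span_notMem W hyW]; omega
  · intro hEq
    exact hyX (hEq ▸ Submodule.mem_sup_right (Submodule.mem_span_singleton_self y))
  · have hXW : X ⊓ (W ⊔ (ℂ ∙ y)) = W := by
      refine le_antisymm ?_ (le_inf hW2 le_sup_left)
      intro v hv
      rw [Submodule.mem_inf] at hv
      obtain ⟨hvX, hvWy⟩ := hv
      rw [Submodule.mem_sup] at hvWy
      obtain ⟨w, hw, u, hu, rfl⟩ := hvWy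
      rw [Submodule.mem_span_singleton] at hu
      obtain ⟨s, rfl⟩ := hu
      rcases eq_or_ne s 0 with rfl | hs
      · simpa using hw
      · exfalso
        have hsy : s • y ∈ X := by
          have := X.sub_mem hvX (hW2 hw)
          simpa using this
        exact hyX (by simpa [hs] using X.smul_mem s⁻¹ hsy)
    rw [hXW, hWr]
  · have hle : (X ⊓ Y) ⊔ (ℂ ∙ y) ≤ (W ⊔ (ℂ ∙ y)) ⊓ Y :=
      sup_le (le_inf (le_trans hW1 le_sup_left) inf_le_right)
        (le_inf le_sup_right ((Submodule.span_singleton_le_iff_mem _ _).2 hyY))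
    have h1 : finrank ℂ ↥((X ⊓ Y) ⊔ (ℂ ∙ y)) = finrank ℂ ↥(X ⊓ Y) + 1 :=
      finrank_sup_span_notMem _ (fun h => hyX ((inf_le_left : X ⊓ Y ≤ X) h))
    haveI : FiniteDimensional ℂ ↥((W ⊔ (ℂ ∙ y)) ⊓ Y) :=
      Submodule.finiteDimensional_of_le inf_le_right
    have h2 := Submodule.finrank_mono hle
    omega
  · exact hY.2 ▸ Submodule.finrank_mono inf_le_right

end AuxLemmas3
section AuxLemmas4
open Module Submodule

variable {H : Type*} [NormedAddCommGroup H] [InnerProductSpace ℂ H] [CompleteSpace H]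

local notation "⟪" x ", " y "⟫" => @inner ℂ _ _ x y

lemma reachable_of_adjacent {k : ℕ} (hk : 0 < k) (hH : 3 ≤ Module.rank ℂ H)
    (X Y : {X : Submodule ℂ H // IsDim k X}) (h : AdjacentSub k X.1 Y.1) :
    (orthoGrassmannGraph H k).Reachable X Y := by
  obtain ⟨hXfd, hXr⟩ := X.2
  obtain ⟨hYfd, hYr⟩ := Y.2
  haveI : FiniteDimensional ℂ X.1 := hXfd
  haveI : FiniteDimensional ℂ Y.1 := hYfd
  have hZr : finrank ℂ ↥(X.1 ⊓ Y.1) = k - 1 := h.2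
  haveI : FiniteDimensional ℂ ↥(X.1 ⊓ Y.1) := Submodule.finiteDimensional_of_le inf_le_left
  have hZX : X.1 ⊓ Y.1 < X.1 := lt_of_le_of_ne inf_le_left (by
    intro hEq
    rw [hEq, hXr] at hZr
    omega)
  have hZY : X.1 ⊓ Y.1 < Y.1 := lt_of_le_of_ne inf_le_right (by
    intro hEq
    rw [hEq, hYr] at hZr
    omega)
  obtain ⟨x, hxX, hxZ, hx0⟩ := exists_mem_orthogonal_of_lt hZX
  obtain ⟨y, hyY, hyZ, hy0⟩ := exists_mem_orthogonal_of_lt hZY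
  have hXeq : X.1 = (X.1 ⊓ Y.1) ⊔ (ℂ ∙ x) := by
    refine (Submodule.eq_of_le_of_finrank_eq
      (sup_le inf_le_left ((Submodule.span_singleton_le_iff_mem _ _).2 hxX)) ?_).symm
    rw [finrank_sup_span_orth _ hxZ hx0, hZr, hXr]
    omega
  have hYeq : Y.1 = (X.1 ⊓ Y.1) ⊔ (ℂ ∙ y) := by
    refine (Submodule.eq_of_le_of_finrank_eq
      (sup_le inf_le_right ((Submodule.span_singleton_le_iff_mem _ _).2 hyY)) ?_).symm
    rw [finrank_sup_span_orth _ hyZ hy0, hZr, hYr]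
    omega
  by_cases hxy : ⟪x, y⟫ = 0
  · -- one step
    have hadj := orthoAdjacent_config (X.1 ⊓ Y.1) hxZ hyZ hx0 hy0 hxy
    have hk' : finrank ℂ ↥(X.1 ⊓ Y.1) + 1 = k := by omega
    apply SimpleGraph.Adj.reachable
    show OrthoAdjacent k X.1 Y.1
    rw [hk'] at hadj
    rw [← hXeq, ← hYeq] at hadj
    exact hadj
  · by_cases hZbot : finrank ℂ ↥(X.1 ⊓ Y.1) = 0
    · -- k = 1
      have hk1 : k = 1 := by omega
      have hZb : X.1 ⊓ Y.1 = ⊥ := Submodule.finrank_eq_zero.1 hZbot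
      have hXx : X.1 = (ℂ ∙ x) := by rw [hXeq, hZb, bot_sup_eq]
      have hYy : Y.1 = (ℂ ∙ y) := by rw [hYeq, hZb, bot_sup_eq]
      -- find z orthogonal to both x and y
      obtain ⟨z, hzM, hz0⟩ : ∃ z, z ∈ ((ℂ ∙ x) ⊔ (ℂ ∙ y))ᗮ ∧ z ≠ 0 := by
        by_contra hc
        push_neg at hc
        have hbot : ((ℂ ∙ x) ⊔ (ℂ ∙ y))ᗮ = ⊥ := by
          rw [Submodule.eq_bot_iff]
          exact fun z hz => hc z hz
        have htop : (ℂ ∙ x) ⊔ (ℂ ∙ y) = ⊤ := by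
          have := Submodule.sup_orthogonal_of_hasOrthogonalProjection (K := (ℂ ∙ x) ⊔ (ℂ ∙ y))
          rwa [hbot, sup_bot_eq] at this
        haveI hfdtop : FiniteDimensional ℂ ↥((ℂ ∙ x) ⊔ (ℂ ∙ y)) := inferInstance
        rw [htop] at hfdtop
        haveI : FiniteDimensional ℂ H := (Submodule.topEquiv (R := ℂ) (M := H)).finiteDimensional
        have hfr : finrank ℂ H ≤ 2 := by
          have h1 := Submodule.finrank_sup_add_finrank_inf_eq (ℂ ∙ x) (ℂ ∙ y)
          rw [finrank_span_singleton hx0, finrank_span_singleton hy0] at h1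
          have h2 : finrank ℂ ↥((ℂ ∙ x) ⊔ (ℂ ∙ y)) ≤ 2 := by omega
          rw [htop, finrank_top] at h2
          exact h2
        have h3 : (3 : Cardinal) ≤ (finrank ℂ H : Cardinal) := by
          rw [Module.finrank_eq_rank]
          exact hH
        have h4 : (3 : ℕ) ≤ finrank ℂ H := by exact_mod_cast h3
        omega
      have hxz : ⟪x, z⟫ = 0 :=
        inner_zero_of_mem_orthogonal (Submodule.mem_sup_left (Submodule.mem_span_singleton_self x)) hzM
      have hyz : ⟪y, z⟫ = 0 :=
        inner_zero_of_mem_orthogonal (Submodule.mem_sup_right (Submodule.mem_span_singleton_self y)) hzM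
      have hzy : ⟪z, y⟫ = 0 := inner_eq_zero_symm.1 hyz
      have htop : ∀ v : H, v ∈ ((⊥ : Submodule ℂ H))ᗮ := by
        intro v
        rw [Submodule.bot_orthogonal_eq_top]
        trivial
      have hbotr : finrank ℂ (⊥ : Submodule ℂ H) + 1 = k := by rw [finrank_bot]; omega
      have cfg1 := orthoAdjacent_config (⊥ : Submodule ℂ H) (htop x) (htop z) hx0 hz0 hxz
      have cfg2 := orthoAdjacent_config (⊥ : Submodule ℂ H) (htop z) (htop y) hz0 hy0 hzy
      have hV1 : IsDim k (ℂ ∙ z) := ⟨inferInstance, by rw [finrank_span_singleton hz0]; omega⟩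
      have e1 : (orthoGrassmannGraph H k).Adj X ⟨ℂ ∙ z, hV1⟩ := by
        show OrthoAdjacent k X.1 (ℂ ∙ z)
        rw [hXx, ← hbotr, show (ℂ ∙ x) = (⊥ : Submodule ℂ H) ⊔ (ℂ ∙ x) from (bot_sup_eq _).symm,
          show (ℂ ∙ z) = (⊥ : Submodule ℂ H) ⊔ (ℂ ∙ z) from (bot_sup_eq _).symm]
        exact cfg1
      have e2 : (orthoGrassmannGraph H k).Adj ⟨ℂ ∙ z, hV1⟩ Y := by
        show OrthoAdjacent k (ℂ ∙ z) Y.1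
        rw [hYy, ← hbotr, show (ℂ ∙ z) = (⊥ : Submodule ℂ H) ⊔ (ℂ ∙ z) from (bot_sup_eq _).symm,
          show (ℂ ∙ y) = (⊥ : Submodule ℂ H) ⊔ (ℂ ∙ y) from (bot_sup_eq _).symm]
        exact cfg2
      exact e1.reachable.trans e2.reachable
    · -- k ≥ 2
      obtain ⟨e, heZ, he0⟩ : ∃ e ∈ X.1 ⊓ Y.1, e ≠ 0 := by
        rw [← Submodule.ne_bot_iff]
        intro hb
        exact hZbot (by rw [hb, finrank_bot])
      have hZ'e : ((X.1 ⊓ Y.1) ⊓ (ℂ ∙ e)ᗮ) ⊔ (ℂ ∙ e) = X.1 ⊓ Y.1 := sup_inf_orth_span heZ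
      set Z' := (X.1 ⊓ Y.1) ⊓ (ℂ ∙ e)ᗮ with hZ'def
      haveI : FiniteDimensional ℂ Z' := Submodule.finiteDimensional_of_le inf_le_left
      have heZ' : e ∈ Z'ᗮ := by
        rw [Submodule.mem_orthogonal]
        intro u hu
        exact inner_eq_zero_symm.1
          ((Submodule.mem_orthogonal_singleton_iff_inner_right).1 hu.2)
      have hxZ' : x ∈ Z'ᗮ := Submodule.orthogonal_le inf_le_left hxZ
      have hyZ' : y ∈ Z'ᗮ := Submodule.orthogonal_le inf_le_left hyZ
      set x' := ⟪x, x⟫ • y - ⟪x, y⟫ • x with hx'def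
      set y' := ⟪y, y⟫ • x - ⟪y, x⟫ • y with hy'def
      have hxx' : ⟪x, x'⟫ = 0 := by
        rw [hx'def, inner_sub_right, inner_smul_right, inner_smul_right]
        ring
      have hyy' : ⟪y, y'⟫ = 0 := by
        rw [hy'def, inner_sub_right, inner_smul_right, inner_smul_right]
        ring
      have hx'Z : x' ∈ (X.1 ⊓ Y.1)ᗮ :=
        Submodule.sub_mem _ (Submodule.smul_mem _ _ hyZ) (Submodule.smul_mem _ _ hxZ)
      have hy'Z : y' ∈ (X.1 ⊓ Y.1)ᗮ :=
        Submodule.sub_mem _ (Submodule.smul_mem _ _ hxZ) (Submodule.smul_mem _ _ hyZ)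
      have hxxne : ⟪x, x⟫ ≠ 0 := inner_self_ne_zero.2 hx0
      have hyyne : ⟪y, y⟫ ≠ 0 := inner_self_ne_zero.2 hy0
      have hx'0 : x' ≠ 0 := by
        intro h0
        rw [hx'def, sub_eq_zero] at h0
        have hy_mem : y ∈ (ℂ ∙ x) := by
          rw [Submodule.mem_span_singleton]
          refine ⟨⟪x, x⟫⁻¹ * ⟪x, y⟫, ?_⟩
          rw [← smul_smul, ← h0, smul_smul, inv_mul_cancel₀ hxxne, one_smul]
        have hyX2 : y ∈ X.1 := ((Submodule.span_singleton_le_iff_mem x X.1).2 hxX) hy_mem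
        have hYX : Y.1 ≤ X.1 := by
          rw [hYeq]
          exact sup_le inf_le_left ((Submodule.span_singleton_le_iff_mem y X.1).2 hyX2)
        exact h.1 (Submodule.eq_of_le_of_finrank_eq hYX (by rw [hXr, hYr])).symm
      have hy'0 : y' ≠ 0 := by
        intro h0
        rw [hy'def, sub_eq_zero] at h0
        have hx_mem : x ∈ (ℂ ∙ y) := by
          rw [Submodule.mem_span_singleton]
          refine ⟨⟪y, y⟫⁻¹ * ⟪y, x⟫, ?_⟩
          rw [← smul_smul, ← h0, smul_smul, inv_mul_cancel₀ hyyne, one_smul]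
        have hxY2 : x ∈ Y.1 := ((Submodule.span_singleton_le_iff_mem y Y.1).2 hyY) hx_mem
        have hXY : X.1 ≤ Y.1 := by
          rw [hXeq]
          exact sup_le inf_le_right ((Submodule.span_singleton_le_iff_mem x Y.1).2 hxY2)
        exact h.1 (Submodule.eq_of_le_of_finrank_eq hXY (by rw [hXr, hYr]))
      have hspan1 : (ℂ ∙ x) ⊔ (ℂ ∙ x') = (ℂ ∙ x) ⊔ (ℂ ∙ y) := by
        have hx'alt : x' = ⟪x, x⟫ • y + (-⟪x, y⟫) • x := by
          rw [hx'def, sub_eq_add_neg, neg_smul]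
        rw [hx'alt]
        exact span_pair_swap _ _ hxxne
      have hspan2 : (ℂ ∙ y) ⊔ (ℂ ∙ y') = (ℂ ∙ y) ⊔ (ℂ ∙ x) := by
        have hy'alt : y' = ⟪y, y⟫ • x + (-⟪y, x⟫) • y := by
          rw [hy'def, sub_eq_add_neg, neg_smul]
        rw [hy'alt]
        exact span_pair_swap _ _ hyyne
      -- the two bases
      have hXW : X.1 = (Z' ⊔ (ℂ ∙ x)) ⊔ (ℂ ∙ e) := by
        rw [hXeq, ← hZ'e, sup_assoc, sup_assoc, sup_comm (ℂ ∙ e) (ℂ ∙ x)]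
      have hYW : Y.1 = (Z' ⊔ (ℂ ∙ y)) ⊔ (ℂ ∙ e) := by
        rw [hYeq, ← hZ'e, sup_assoc, sup_assoc, sup_comm (ℂ ∙ e) (ℂ ∙ y)]
      have hMalt : (Z' ⊔ (ℂ ∙ x)) ⊔ (ℂ ∙ x') = (Z' ⊔ (ℂ ∙ y)) ⊔ (ℂ ∙ y') := by
        rw [sup_assoc, sup_assoc, hspan1, hspan2, sup_comm (ℂ ∙ y) (ℂ ∙ x)]
      -- orthogonality conditions
      have hxe : ⟪x, e⟫ = 0 := inner_eq_zero_symm.1 (inner_zero_of_mem_orthogonal heZ hxZ)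
      have hye : ⟪y, e⟫ = 0 := inner_eq_zero_symm.1 (inner_zero_of_mem_orthogonal heZ hyZ)
      have heW1 : e ∈ (Z' ⊔ (ℂ ∙ x))ᗮ :=
        mem_orthogonal_sup heZ' ((Submodule.mem_orthogonal_singleton_iff_inner_right).2 hxe)
      have heW2 : e ∈ (Z' ⊔ (ℂ ∙ y))ᗮ :=
        mem_orthogonal_sup heZ' ((Submodule.mem_orthogonal_singleton_iff_inner_right).2 hye)
      have hx'W1 : x' ∈ (Z' ⊔ (ℂ ∙ x))ᗮ :=
        mem_orthogonal_sup (Submodule.orthogonal_le inf_le_left hx'Z)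
          ((Submodule.mem_orthogonal_singleton_iff_inner_right).2 hxx')
      have hy'W2 : y' ∈ (Z' ⊔ (ℂ ∙ y))ᗮ :=
        mem_orthogonal_sup (Submodule.orthogonal_le inf_le_left hy'Z)
          ((Submodule.mem_orthogonal_singleton_iff_inner_right).2 hyy')
      have hex' : ⟪e, x'⟫ = 0 := inner_zero_of_mem_orthogonal heZ hx'Z
      have hy'e : ⟪y', e⟫ = 0 := inner_eq_zero_symm.1 (inner_zero_of_mem_orthogonal heZ hy'Z)
      -- dimensions
      have hZ'r : finrank ℂ Z' + 1 = k - 1 := by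
        have := finrank_sup_span_orth Z' heZ' he0
        rw [hZ'e] at this
        omega
      have hW1r : finrank ℂ ↥(Z' ⊔ (ℂ ∙ x)) + 1 = k := by
        rw [finrank_sup_span_orth Z' hxZ' hx0]
        omega
      have hW2r : finrank ℂ ↥(Z' ⊔ (ℂ ∙ y)) + 1 = k := by
        rw [finrank_sup_span_orth Z' hyZ' hy0]
        omega
      have cfg1 := orthoAdjacent_config (Z' ⊔ (ℂ ∙ x)) heW1 hx'W1 he0 hx'0 hex'
      have cfg2 := orthoAdjacent_config (Z' ⊔ (ℂ ∙ y)) hy'W2 heW2 hy'0 he0 hy'e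
      have hV1 : IsDim k ((Z' ⊔ (ℂ ∙ x)) ⊔ (ℂ ∙ x')) := by
        rw [← hW1r]
        exact isDim_config _ hx'W1 hx'0
      have e1 : (orthoGrassmannGraph H k).Adj X ⟨_, hV1⟩ := by
        show OrthoAdjacent k X.1 ((Z' ⊔ (ℂ ∙ x)) ⊔ (ℂ ∙ x'))
        rw [hW1r] at cfg1
        rw [← hXW] at cfg1
        exact cfg1
      have e2 : (orthoGrassmannGraph H k).Adj ⟨_, hV1⟩ Y := by
        show OrthoAdjacent k ((Z' ⊔ (ℂ ∙ x)) ⊔ (ℂ ∙ x')) Y.1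
        rw [hW2r] at cfg2
        rw [← hYW, ← hMalt] at cfg2
        exact cfg2
      exact e1.reachable.trans e2.reachable

end AuxLemmas4
/-- The ortho-Grassmann graph `Γ⊥_k(H)` is connected: any two `k`-dimensional subspaces of `H`
are joined by a finite path of consecutively ortho-adjacent `k`-dimensional subspaces. -/
theorem orthoGrassmannGraph_preconnected
    (k : ℕ) (hk : 0 < k) (hH : 3 ≤ Module.rank ℂ H)
    (hkH : (k : Cardinal) < Module.rank ℂ H) :
    (orthoGrassmannGraph H k).Preconnected := by
  have key : ∀ (n : ℕ) (X Y : {X : Submodule ℂ H // IsDim k X}),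
      k - Module.finrank ℂ ↥(X.1 ⊓ Y.1) ≤ n → (orthoGrassmannGraph H k).Reachable X Y := by
    intro n
    induction n with
    | zero =>
      intro X Y hn
      haveI : FiniteDimensional ℂ X.1 := X.2.1
      haveI : FiniteDimensional ℂ Y.1 := Y.2.1
      have h1 : Module.finrank ℂ ↥(X.1 ⊓ Y.1) ≤ k := by
        have h0 := Submodule.finrank_mono (inf_le_left : X.1 ⊓ Y.1 ≤ X.1)
        rw [X.2.2] at h0
        exact h0
      have h2 : X.1 ⊓ Y.1 = X.1 := Submodule.eq_of_le_of_finrank_eq inf_le_left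
        (by rw [X.2.2]; omega)
      have h3 : X.1 ≤ Y.1 := h2 ▸ inf_le_right
      have h4 : X = Y := Subtype.ext
        (Submodule.eq_of_le_of_finrank_eq h3 (by rw [X.2.2, Y.2.2]))
      subst h4
      exact SimpleGraph.Reachable.refl X
    | succ n ih =>
      intro X Y hn
      by_cases heq : X.1 = Y.1
      · have h4 : X = Y := Subtype.ext heq
        subst h4
        exact SimpleGraph.Reachable.refl X
      · obtain ⟨X', hX'dim, hadj, hlt, hle⟩ := grassmann_step hk X.2 Y.2 heq
        have r1 := reachable_of_adjacent hk hH X ⟨X', hX'dim⟩ hadj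
        have r2 := ih ⟨X', hX'dim⟩ Y
          (show k - Module.finrank ℂ ↥(X' ⊓ Y.1) ≤ n by omega)
        exact r1.trans r2
  intro X Y
  exact key _ X Y le_rfl

end
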